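/- The Wiener index of the zero divisor graph Γ(Z/p^3 Z) equals (p−1)(2p^3 − 3p − 2)/2. -/

import Mathlib

open scoped Classical

/-- The zero divisor graph of `ZMod n`: vertices are nonzero zero divisors,
`x ~ y` iff `x ≠ y` and `x * y = 0`. -/
def zdGraph (n : ℕ) : SimpleGraph {x : ZMod n // x ≠ 0 ∧ ∃ y ≠ 0, x * y = 0} where
  Adj a b := a ≠ b ∧ (a : ZMod n) * (b : ZMod n) = 0
  symm := by
    constructor
    intro a b h
    exact ⟨h.1.symm, by rw [mul_comm]; exact h.2⟩
  loopless := ⟨fun a h => h.1 rfl⟩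

section Aux
variable {p : ℕ} [hF : Fact p.Prime]

private lemma zd_mem_iff (x : ZMod (p^3)) :
    (x ≠ 0 ∧ ∃ y ≠ 0, x * y = 0) ↔ x ≠ 0 ∧ p ∣ x.val := by
  have hp : p.Prime := Fact.out
  haveI : NeZero (p^3) := ⟨pow_ne_zero 3 hp.ne_zero⟩
  constructor
  · rintro ⟨hx, y, hy, hxy⟩
    refine ⟨hx, ?_⟩
    by_contra hdvd
    have hco : (x.val).Coprime (p^3) :=
      Nat.Coprime.pow_right 3 ((hp.coprime_iff_not_dvd.mpr hdvd).symm)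
    have hu : IsUnit x := by
      have := (ZMod.isUnit_iff_coprime x.val (p^3)).mpr hco
      rwa [ZMod.natCast_val, ZMod.cast_id] at this
    exact hy ((IsUnit.mul_right_eq_zero hu).mp hxy)
  · rintro ⟨hx, k, hk⟩
    refine ⟨hx, ((p^2 : ℕ) : ZMod (p^3)), ?_, ?_⟩
    · rw [Ne, ZMod.natCast_eq_zero_iff]
      intro h
      have h1 := Nat.le_of_dvd (pow_pos hp.pos 2) h
      have h2 : p^2 < p^3 := Nat.pow_lt_pow_right hp.one_lt (by norm_num)
      omega
    · have hxx : x = ((x.val : ℕ) : ZMod (p^3)) := by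
        rw [ZMod.natCast_val, ZMod.cast_id]
      rw [hxx, hk, ← Nat.cast_mul, show p * k * p^2 = p^3 * k by ring,
        Nat.cast_mul, ZMod.natCast_self, zero_mul]

private lemma mul_zero_iff {x y : ZMod (p^3)} (hx : p ∣ x.val) (hy : p ∣ y.val) :
    x * y = 0 ↔ p^2 ∣ x.val ∨ p^2 ∣ y.val := by
  have hp : p.Prime := Fact.out
  haveI : NeZero (p^3) := ⟨pow_ne_zero 3 hp.ne_zero⟩
  obtain ⟨a, ha⟩ := hx
  obtain ⟨b, hb⟩ := hy
  have hxx : x = ((x.val : ℕ) : ZMod (p^3)) := by rw [ZMod.natCast_val, ZMod.cast_id]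
  have hyy : y = ((y.val : ℕ) : ZMod (p^3)) := by rw [ZMod.natCast_val, ZMod.cast_id]
  have key : x * y = 0 ↔ p ∣ a * b := by
    rw [hxx, hyy, ← Nat.cast_mul, ZMod.natCast_eq_zero_iff, ha, hb,
      show p*a*(p*b) = p*p*(a*b) by ring, show p^3 = p*p*p by ring,
      Nat.mul_dvd_mul_iff_left (Nat.mul_pos hp.pos hp.pos)]
  rw [key, hp.dvd_mul, ha, hb, pow_two, Nat.mul_dvd_mul_iff_left hp.pos,
    Nat.mul_dvd_mul_iff_left hp.pos]

private lemma dist_eq_aux (a b : {x : ZMod (p^3) // x ≠ 0 ∧ ∃ y ≠ 0, x * y = 0}) :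
    (zdGraph (p^3)).dist a b =
      if a = b then 0 else
      if p^2 ∣ (a : ZMod (p^3)).val ∨ p^2 ∣ (b : ZMod (p^3)).val then 1 else 2 := by
  have hp : p.Prime := Fact.out
  haveI : NeZero (p^3) := ⟨pow_ne_zero 3 hp.ne_zero⟩
  have hpa : p ∣ (a : ZMod (p^3)).val := ((zd_mem_iff _).mp a.2).2
  have hpb : p ∣ (b : ZMod (p^3)).val := ((zd_mem_iff _).mp b.2).2
  by_cases hab : a = b
  · simp [hab]
  rw [if_neg hab]
  by_cases hQ : p^2 ∣ (a : ZMod (p^3)).val ∨ p^2 ∣ (b : ZMod (p^3)).val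
  · rw [if_pos hQ]
    exact (SimpleGraph.dist_eq_one_iff_adj).mpr ⟨hab, (mul_zero_iff hpa hpb).mpr hQ⟩
  · rw [if_neg hQ]
    push_neg at hQ
    obtain ⟨hQa, hQb⟩ := hQ
    have hc2lt : p^2 < p^3 := Nat.pow_lt_pow_right hp.one_lt (by norm_num)
    have hcval : (((p^2 : ℕ) : ZMod (p^3))).val = p^2 := ZMod.val_cast_of_lt hc2lt
    have hcne : ((p^2 : ℕ) : ZMod (p^3)) ≠ 0 := by
      rw [Ne, ZMod.natCast_eq_zero_iff]
      intro h
      have h1 := Nat.le_of_dvd (pow_pos hp.pos 2) h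
      omega
    have hcmem : ((p^2 : ℕ) : ZMod (p^3)) ≠ 0 ∧ ∃ y ≠ 0, ((p^2 : ℕ) : ZMod (p^3)) * y = 0 :=
      (zd_mem_iff _).mpr ⟨hcne, by rw [hcval]; exact dvd_pow_self p two_ne_zero⟩
    set c : {x : ZMod (p^3) // x ≠ 0 ∧ ∃ y ≠ 0, x * y = 0} := ⟨_, hcmem⟩ with hc
    have hpc : p ∣ (c : ZMod (p^3)).val := ((zd_mem_iff _).mp c.2).2
    have hc2 : p^2 ∣ (c : ZMod (p^3)).val := by rw [hc]; rw [hcval]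
    have hac : (zdGraph (p^3)).Adj a c := by
      refine ⟨fun h => hQa ?_, (mul_zero_iff hpa hpc).mpr (Or.inr hc2)⟩
      rw [h]; exact hc2
    have hcb : (zdGraph (p^3)).Adj c b := by
      refine ⟨fun h => hQb ?_, (mul_zero_iff hpc hpb).mpr (Or.inl hc2)⟩
      rw [← h]; exact hc2
    have hle : (zdGraph (p^3)).dist a b ≤ 2 := by
      simpa using SimpleGraph.dist_le
        (SimpleGraph.Walk.cons hac (SimpleGraph.Walk.cons hcb SimpleGraph.Walk.nil))
    have h0 : (zdGraph (p^3)).dist a b ≠ 0 := by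
      rw [Ne, SimpleGraph.dist_eq_zero_iff_eq_or_not_reachable]
      push_neg
      exact ⟨hab, ⟨SimpleGraph.Walk.cons hac (SimpleGraph.Walk.cons hcb SimpleGraph.Walk.nil)⟩⟩
    have h1 : (zdGraph (p^3)).dist a b ≠ 1 := by
      rw [Ne, SimpleGraph.dist_eq_one_iff_adj]
      rintro ⟨-, hmul⟩
      rcases (mul_zero_iff hpa hpb).mp hmul with h | h
      · exact hQa h
      · exact hQb h
    omega

private lemma count_aux (k m : ℕ) (hkm : k + m = 3) :
    (Finset.univ.filter (fun x : ZMod (p^3) => x ≠ 0 ∧ p^k ∣ x.val)).card = p^m - 1 := by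
  have hp : p.Prime := Fact.out
  haveI : NeZero (p^3) := ⟨pow_ne_zero 3 hp.ne_zero⟩
  rw [← Nat.card_Ico 1 (p^m)]
  apply Finset.card_bij' (i := fun x _ => x.val / p^k)
    (j := fun m' _ => ((p^k * m' : ℕ) : ZMod (p^3)))
  · intro x hx
    simp only [Finset.mem_filter, Finset.mem_univ, true_and] at hx
    obtain ⟨hx0, c, hc⟩ := hx
    have hvlt : x.val < p^3 := ZMod.val_lt x
    have hv0 : x.val ≠ 0 := fun h => hx0 (by rwa [ZMod.val_eq_zero] at h)
    have hpk : 0 < p^k := pow_pos hp.pos k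
    rw [Finset.mem_Ico]
    constructor
    · rw [hc, Nat.mul_div_cancel_left _ hpk]
      rcases Nat.eq_zero_or_pos c with h | h
      · exfalso; apply hv0; rw [hc, h, mul_zero]
      · exact h
    · rw [Nat.div_lt_iff_lt_mul hpk]
      calc x.val < p^3 := hvlt
        _ = p^m * p^k := by rw [← pow_add, Nat.add_comm m k, hkm]
  · intro m' hm'
    rw [Finset.mem_Ico] at hm'
    have hlt : p^k * m' < p^3 := by
      calc p^k * m' < p^k * p^m :=
            Nat.mul_lt_mul_of_le_of_lt (le_refl (p^k)) hm'.2 (pow_pos hp.pos k)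
        _ = p^3 := by rw [← pow_add, hkm]
    have hval : (((p^k * m' : ℕ) : ZMod (p^3))).val = p^k * m' := ZMod.val_cast_of_lt hlt
    simp only [Finset.mem_filter, Finset.mem_univ, true_and]
    constructor
    · rw [Ne, ← ZMod.val_eq_zero, hval]
      exact Nat.mul_ne_zero (pow_pos hp.pos k).ne' (by omega)
    · rw [hval]; exact Dvd.intro m' rfl
  · intro x hx
    simp only [Finset.mem_filter, Finset.mem_univ, true_and] at hx
    obtain ⟨hx0, hdvd⟩ := hx
    rw [Nat.mul_div_cancel' hdvd, ZMod.natCast_val, ZMod.cast_id]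
  · intro m' hm'
    rw [Finset.mem_Ico] at hm'
    have hlt : p^k * m' < p^3 := by
      calc p^k * m' < p^k * p^m :=
            Nat.mul_lt_mul_of_le_of_lt (le_refl (p^k)) hm'.2 (pow_pos hp.pos k)
        _ = p^3 := by rw [← pow_add, hkm]
    rw [ZMod.val_cast_of_lt hlt, Nat.mul_div_cancel_left _ (pow_pos hp.pos k)]

end Aux

set_option maxHeartbeats 1000000 in
/-- The Wiener index of `Γ(ZMod (p^3))` equals `(p-1)(2p^3 - 3p - 2)/2`; since the sum of
distances over all ordered pairs is twice the Wiener index, this says that the double sum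
of distances equals `(p-1)(2p^3 - 3p - 2)`. -/
theorem wiener_index_zd_graph_p_cubed (p : ℕ) [Fact p.Prime] :
    ∑ x : {x : ZMod (p ^ 3) // x ≠ 0 ∧ ∃ y ≠ 0, x * y = 0},
      ∑ y : {x : ZMod (p ^ 3) // x ≠ 0 ∧ ∃ y ≠ 0, x * y = 0},
        (zdGraph (p ^ 3)).dist x y = (p - 1) * (2 * p ^ 3 - 3 * p - 2) := by
  classical
  have hp : p.Prime := Fact.out
  haveI : NeZero (p^3) := ⟨pow_ne_zero 3 hp.ne_zero⟩
  have hp2 : 2 ≤ p := hp.two_le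
  have hpsq : p + 2 ≤ p^2 := by nlinarith
  have hN : Fintype.card {x : ZMod (p^3) // x ≠ 0 ∧ ∃ y ≠ 0, x * y = 0} = p^2 - 1 := by
    rw [Fintype.card_congr (Equiv.subtypeEquivRight fun x => zd_mem_iff x),
      Fintype.card_subtype]
    have := count_aux (p := p) 1 2 rfl
    simpa using this
  have hB : (Finset.univ.filter
      (fun a : {x : ZMod (p^3) // x ≠ 0 ∧ ∃ y ≠ 0, x * y = 0} =>
        p^2 ∣ (a : ZMod (p^3)).val)).card = p - 1 := by
    rw [← Fintype.card_subtype]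
    have e : {a : {x : ZMod (p^3) // x ≠ 0 ∧ ∃ y ≠ 0, x * y = 0} //
        p^2 ∣ (a : ZMod (p^3)).val} ≃ {x : ZMod (p^3) // x ≠ 0 ∧ p^2 ∣ x.val} :=
      (Equiv.subtypeSubtypeEquivSubtypeInter (fun x : ZMod (p^3) => x ≠ 0 ∧ ∃ y ≠ 0, x * y = 0) (fun x : ZMod (p^3) => p^2 ∣ x.val)).trans (Equiv.subtypeEquivRight fun x => by
        constructor
        · rintro ⟨⟨h0, -⟩, h2⟩; exact ⟨h0, h2⟩
        · rintro ⟨h0, h2⟩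
          exact ⟨(zd_mem_iff x).mpr ⟨h0, dvd_trans (dvd_pow_self p two_ne_zero) h2⟩, h2⟩)
    rw [Fintype.card_congr e, Fintype.card_subtype]
    have := count_aux (p := p) 2 1 rfl
    simpa using this
  set Acard := (Finset.univ.filter
      (fun a : {x : ZMod (p^3) // x ≠ 0 ∧ ∃ y ≠ 0, x * y = 0} =>
        ¬ p^2 ∣ (a : ZMod (p^3)).val)).card with hAcard_def
  have htot := Finset.card_filter_add_card_filter_not
    (s := (Finset.univ : Finset {x : ZMod (p^3) // x ≠ 0 ∧ ∃ y ≠ 0, x * y = 0}))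
    (p := fun a => p^2 ∣ (a : ZMod (p^3)).val)
  rw [hB, Finset.card_univ, hN, ← hAcard_def] at htot
  have hA : Acard = p^2 - p := by
    zify [show 1 ≤ p by omega, show 1 ≤ p^2 by nlinarith, show p ≤ p^2 by nlinarith] at htot ⊢
    linarith
  have hrow1 : ∀ a : {x : ZMod (p^3) // x ≠ 0 ∧ ∃ y ≠ 0, x * y = 0},
      ∑ b : {x : ZMod (p^3) // x ≠ 0 ∧ ∃ y ≠ 0, x * y = 0}, (if a = b then (0:ℕ) else 1)
        = Fintype.card {x : ZMod (p^3) // x ≠ 0 ∧ ∃ y ≠ 0, x * y = 0} - 1 := by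
    intro a
    have h1 : ∀ b : {x : ZMod (p^3) // x ≠ 0 ∧ ∃ y ≠ 0, x * y = 0},
        (if a = b then (0:ℕ) else 1) = if b ≠ a then 1 else 0 := by
      intro b
      rcases eq_or_ne a b with h | h
      · subst h; simp
      · simp [h, Ne.symm h]
    rw [Finset.sum_congr rfl fun b _ => h1 b, ← Finset.card_filter,
      Finset.filter_ne', Finset.card_erase_of_mem (Finset.mem_univ a), Finset.card_univ]
  have hrow2 : ∀ a : {x : ZMod (p^3) // x ≠ 0 ∧ ∃ y ≠ 0, x * y = 0},
      ∑ b : {x : ZMod (p^3) // x ≠ 0 ∧ ∃ y ≠ 0, x * y = 0},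
        (if a ≠ b ∧ ¬ p^2 ∣ (a : ZMod (p^3)).val ∧ ¬ p^2 ∣ (b : ZMod (p^3)).val
          then (1:ℕ) else 0)
        = if ¬ p^2 ∣ (a : ZMod (p^3)).val then Acard - 1 else 0 := by
    intro a
    by_cases hQ : p^2 ∣ (a : ZMod (p^3)).val
    · simp [hQ]
    · rw [if_pos hQ]
      have h1 : ∀ b : {x : ZMod (p^3) // x ≠ 0 ∧ ∃ y ≠ 0, x * y = 0},
          (if a ≠ b ∧ ¬ p^2 ∣ (a : ZMod (p^3)).val ∧ ¬ p^2 ∣ (b : ZMod (p^3)).val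
            then (1:ℕ) else 0)
          = if b ≠ a ∧ ¬ p^2 ∣ (b : ZMod (p^3)).val then 1 else 0 := by
        intro b
        refine if_congr ?_ rfl rfl
        rw [ne_comm]
        tauto
      rw [Finset.sum_congr rfl fun b _ => h1 b, ← Finset.card_filter]
      have h2 : (Finset.univ.filter
          (fun b : {x : ZMod (p^3) // x ≠ 0 ∧ ∃ y ≠ 0, x * y = 0} =>
            b ≠ a ∧ ¬ p^2 ∣ (b : ZMod (p^3)).val))
          = (Finset.univ.filter
            (fun b : {x : ZMod (p^3) // x ≠ 0 ∧ ∃ y ≠ 0, x * y = 0} =>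
              ¬ p^2 ∣ (b : ZMod (p^3)).val)).erase a := by
        ext b
        simp only [Finset.mem_filter, Finset.mem_erase, Finset.mem_univ, true_and]
        try tauto
      rw [h2, Finset.card_erase_of_mem (by simp [hQ]), ← hAcard_def]
  calc ∑ x : {x : ZMod (p ^ 3) // x ≠ 0 ∧ ∃ y ≠ 0, x * y = 0},
      ∑ y : {x : ZMod (p ^ 3) // x ≠ 0 ∧ ∃ y ≠ 0, x * y = 0},
        (zdGraph (p ^ 3)).dist x y
      = ∑ a : {x : ZMod (p^3) // x ≠ 0 ∧ ∃ y ≠ 0, x * y = 0},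
          ∑ b : {x : ZMod (p^3) // x ≠ 0 ∧ ∃ y ≠ 0, x * y = 0},
            ((if a = b then (0:ℕ) else 1) +
              (if a ≠ b ∧ ¬ p^2 ∣ (a : ZMod (p^3)).val ∧ ¬ p^2 ∣ (b : ZMod (p^3)).val
                then 1 else 0)) := by
        refine Finset.sum_congr rfl fun a _ => Finset.sum_congr rfl fun b _ => ?_
        rw [dist_eq_aux]
        split_ifs <;> first | rfl | tauto
    _ = ∑ a : {x : ZMod (p^3) // x ≠ 0 ∧ ∃ y ≠ 0, x * y = 0},
          ((Fintype.card {x : ZMod (p^3) // x ≠ 0 ∧ ∃ y ≠ 0, x * y = 0} - 1) +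
            (if ¬ p^2 ∣ (a : ZMod (p^3)).val then Acard - 1 else 0)) := by
        refine Finset.sum_congr rfl fun a _ => ?_
        rw [Finset.sum_add_distrib, hrow1 a, hrow2 a]
    _ = Fintype.card {x : ZMod (p^3) // x ≠ 0 ∧ ∃ y ≠ 0, x * y = 0} *
          (Fintype.card {x : ZMod (p^3) // x ≠ 0 ∧ ∃ y ≠ 0, x * y = 0} - 1) +
          Acard * (Acard - 1) := by
        rw [Finset.sum_add_distrib, Finset.sum_const, Finset.card_univ, smul_eq_mul]
        congr 1
        rw [← Finset.sum_filter, Finset.sum_const, smul_eq_mul, ← hAcard_def]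
    _ = (p - 1) * (2 * p ^ 3 - 3 * p - 2) := by
        rw [hN, hA]
        have e1 : 1 ≤ p^2 - 1 := Nat.le_sub_of_add_le (by nlinarith)
        have e2 : 1 ≤ p^2 - p := Nat.le_sub_of_add_le (by nlinarith)
        have e3 : 3 * p ≤ 2 * p^3 := by nlinarith
        have e4 : 2 ≤ 2 * p^3 - 3 * p := Nat.le_sub_of_add_le (by nlinarith)
        zify [show 1 ≤ p by omega, show 1 ≤ p^2 by nlinarith, show p ≤ p^2 by nlinarith,
          e1, e2, e3, e4]
        ring
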